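/- Let μ = λ + 2(log n)/(α₂ n) and assume μ ≤ 1 and n ≥ 2. Then for each k ∈ {1,…,n}, P(max_{1≤ℓ≤n} X_ℓ ≤ 2 − μ | I_k = 1) ≤ 1/n. -/

import Mathlib

open MeasureTheory ProbabilityTheory

/-- In the two-component uniform mixture with overlap `λ`, for
`μ = λ + 2(log n)/(α₂ n) ≤ 1` and `n ≥ 2`, one has
`P(max_ℓ X_ℓ ≤ 2 − μ | I_k = 1) ≤ 1/n` for each `k`, stated here as
`P({max_ℓ X_ℓ ≤ 2 − μ} ∩ {I_k = 1}) ≤ (1/n) P(I_k = 1)`. -/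
theorem stmt_15 {Ω : Type*} [MeasurableSpace Ω] (P : Measure Ω) [IsProbabilityMeasure P]
    (n : ℕ) (hn : 2 ≤ n) (lam : ℝ) (hlam : lam ∈ Set.Ioo (0 : ℝ) 1)
    (X : Fin n → Ω → ℝ) (I : Fin n → Ω → ℕ)
    (hXmeas : ∀ k, Measurable (X k)) (hImeas : ∀ k, Measurable (I k))
    (hIrange : ∀ k ω, I k ω = 1 ∨ I k ω = 2)
    -- the pairs (X_k, I_k) are i.i.d.
    (hindep : iIndepFun (fun k ω => (X k ω, I k ω)) P)
    (hident : ∀ k : Fin n,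
      Measure.map (fun ω => (X k ω, I k ω)) P
        = Measure.map (fun ω => (X ⟨0, by omega⟩ ω, I ⟨0, by omega⟩ ω)) P)
    -- mixture weights
    (α : ℕ → ℝ) (hα : ∀ i, α i = (P {ω | I ⟨0, by omega⟩ ω = i}).toReal)
    (hα1 : α 1 ∈ Set.Ioo (0 : ℝ) 1) (hα2 : α 2 ∈ Set.Ioo (0 : ℝ) 1)
    -- conditional densities: g₁ = 1_{[0,1]} and g₂ = 1_{[1−λ, 2−λ]}
    (hg1 : ∀ s : Set ℝ, MeasurableSet s →
      (P ({ω | I ⟨0, by omega⟩ ω = 1} ∩ (X ⟨0, by omega⟩) ⁻¹' s)).toReal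
        = α 1 * ∫ t in s, (Set.Icc (0 : ℝ) 1).indicator (fun _ => (1 : ℝ)) t)
    (hg2 : ∀ s : Set ℝ, MeasurableSet s →
      (P ({ω | I ⟨0, by omega⟩ ω = 2} ∩ (X ⟨0, by omega⟩) ⁻¹' s)).toReal
        = α 2 * ∫ t in s, (Set.Icc (1 - lam) (2 - lam)).indicator (fun _ => (1 : ℝ)) t)
    (μ : ℝ) (hμ : μ = lam + 2 * Real.log n / (α 2 * n)) (hμ1 : μ ≤ 1) :
    ∀ k : Fin n,
      (P ({ω | ∀ ℓ : Fin n, X ℓ ω ≤ 2 - μ} ∩ {ω | I k ω = 1})).toReal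
        ≤ 1 / n * (P {ω | I k ω = 1}).toReal := by
  intro k
  have hn0 : (0 : ℝ) < n := by positivity
  have hn1 : (1 : ℝ) ≤ n := by exact_mod_cast Nat.one_le_of_lt hn
  have hlogn : 0 ≤ Real.log n := Real.log_nonneg hn1
  have hα2pos : 0 < α 2 := hα2.1
  have hμlam : lam ≤ μ := by
    rw [hμ]; nlinarith [mul_pos hα2pos hn0, div_nonneg (by linarith : (0:ℝ) ≤ 2 * Real.log n) (le_of_lt (mul_pos hα2pos hn0))]
  set k0 : Fin n := ⟨0, by omega⟩ with hk0
  set Y : Fin n → Ω → ℝ × ℕ := fun ℓ ω => (X ℓ ω, I ℓ ω) with hY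
  have hYmeas : ∀ ℓ, Measurable (Y ℓ) := fun ℓ => (hXmeas ℓ).prodMk (hImeas ℓ)
  set S : Fin n → Set (ℝ × ℕ) :=
    fun ℓ => if ℓ = k then {p : ℝ × ℕ | p.2 = 1} else {p : ℝ × ℕ | p.1 ≤ 2 - μ} with hS
  have hSmeas : ∀ ℓ, MeasurableSet (S ℓ) := by
    intro ℓ
    by_cases h : ℓ = k
    · simp only [hS, if_pos h]
      exact measurable_snd (measurableSet_singleton 1)
    · simp only [hS, if_neg h]
      exact measurable_fst measurableSet_Iic
  -- independence product formula
  have hprod : P (⋂ ℓ, Y ℓ ⁻¹' S ℓ) = ∏ ℓ, P (Y ℓ ⁻¹' S ℓ) := by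
    refine hindep.meas_iInter fun ℓ => ⟨S ℓ, hSmeas ℓ, rfl⟩
  -- subset
  have hsub : {ω | ∀ ℓ : Fin n, X ℓ ω ≤ 2 - μ} ∩ {ω | I k ω = 1} ⊆ ⋂ ℓ, Y ℓ ⁻¹' S ℓ := by
    rintro ω ⟨h1, h2⟩
    refine Set.mem_iInter.2 fun ℓ => ?_
    by_cases h : ℓ = k
    · simp only [hS, if_pos h, Set.mem_preimage, Set.mem_setOf_eq]
      rw [h]; exact h2
    · simp only [hS, if_neg h, Set.mem_preimage, Set.mem_setOf_eq]
      exact h1 ℓ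
  -- identify factors
  have hSk : Y k ⁻¹' S k = {ω | I k ω = 1} := by
    ext ω; simp [hS, hY]
  set q : ENNReal := P {ω | X k0 ω ≤ 2 - μ} with hq
  have hfac : ∀ ℓ, ℓ ≠ k → P (Y ℓ ⁻¹' S ℓ) = q := by
    intro ℓ hℓ
    have hset : S ℓ = {p : ℝ × ℕ | p.1 ≤ 2 - μ} := by simp [hS, hℓ]
    have hms : MeasurableSet {p : ℝ × ℕ | p.1 ≤ 2 - μ} := measurable_fst measurableSet_Iic
    have h1 : P (Y ℓ ⁻¹' S ℓ) = Measure.map (Y ℓ) P {p : ℝ × ℕ | p.1 ≤ 2 - μ} := by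
      rw [hset, Measure.map_apply (hYmeas ℓ) hms]
    have h2 : Measure.map (Y k0) P {p : ℝ × ℕ | p.1 ≤ 2 - μ} = q := by
      rw [Measure.map_apply (hYmeas k0) hms]
      rfl
    rw [h1, hident ℓ]
    exact h2
  -- product rewrite
  have hprod2 : P (⋂ ℓ, Y ℓ ⁻¹' S ℓ) = P {ω | I k ω = 1} * q ^ (n - 1) := by
    rw [hprod, ← Finset.mul_prod_erase Finset.univ _ (Finset.mem_univ k), hSk]
    congr 1
    rw [Finset.prod_congr rfl (fun ℓ hℓ => hfac ℓ (Finset.ne_of_mem_erase hℓ)),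
      Finset.prod_const, Finset.card_erase_of_mem (Finset.mem_univ k), Finset.card_univ,
      Fintype.card_fin]
  -- compute q.toReal
  have hPfin : ∀ s : Set Ω, P s ≠ ⊤ := fun s => measure_ne_top P s
  have hI12 : {ω | I k0 ω = 1} ∪ {ω | I k0 ω = 2} = Set.univ := by
    ext ω; simpa using hIrange k0 ω
  have hIdisj : Disjoint {ω | I k0 ω = 1} {ω | I k0 ω = 2} := by
    rw [Set.disjoint_left]
    rintro ω h1 h2
    simp only [Set.mem_setOf_eq] at h1 h2
    omega
  have hImeas2 : MeasurableSet {ω | I k0 ω = 2} := hImeas k0 (measurableSet_singleton 2)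
  have halphasum : α 1 + α 2 = 1 := by
    rw [hα 1, hα 2, ← ENNReal.toReal_add (hPfin _) (hPfin _),
      ← measure_union hIdisj hImeas2, hI12, measure_univ, ENNReal.toReal_one]
  have hsplit : {ω | X k0 ω ≤ 2 - μ}
      = ({ω | I k0 ω = 1} ∩ (X k0) ⁻¹' Set.Iic (2 - μ))
        ∪ ({ω | I k0 ω = 2} ∩ (X k0) ⁻¹' Set.Iic (2 - μ)) := by
    rw [← Set.union_inter_distrib_right, hI12, Set.univ_inter]
    rfl
  have hint1 : (∫ t in Set.Iic (2 - μ),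
      (Set.Icc (0 : ℝ) 1).indicator (fun _ => (1 : ℝ)) t) = 1 := by
    rw [setIntegral_indicator measurableSet_Icc]
    have : Set.Iic (2 - μ) ∩ Set.Icc (0 : ℝ) 1 = Set.Icc (0 : ℝ) 1 := by
      apply Set.inter_eq_right.2
      intro x hx
      exact le_trans hx.2 (by linarith)
    rw [this, setIntegral_const, measureReal_def, Real.volume_Icc, smul_eq_mul, mul_one,
      ENNReal.toReal_ofReal (by norm_num)]
    norm_num
  have hint2 : (∫ t in Set.Iic (2 - μ),
      (Set.Icc (1 - lam) (2 - lam)).indicator (fun _ => (1 : ℝ)) t) = 1 + lam - μ := by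
    rw [setIntegral_indicator measurableSet_Icc]
    have : Set.Iic (2 - μ) ∩ Set.Icc (1 - lam) (2 - lam) = Set.Icc (1 - lam) (2 - μ) := by
      ext x
      simp only [Set.mem_inter_iff, Set.mem_Iic, Set.mem_Icc]
      constructor
      · rintro ⟨h1, h2, h3⟩; exact ⟨h2, h1⟩
      · rintro ⟨h1, h2⟩; exact ⟨h2, h1, by linarith⟩
    rw [this, setIntegral_const, measureReal_def, Real.volume_Icc, smul_eq_mul, mul_one,
      ENNReal.toReal_ofReal (by linarith [hlam.1])]
    ring
  have hqval : q.toReal = 1 - 2 * Real.log n / n := by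
    have hmIic : MeasurableSet (Set.Iic (2 - μ)) := measurableSet_Iic
    have hE : {ω | X k0 ω ≤ 2 - μ} = (X k0) ⁻¹' Set.Iic (2 - μ) := rfl
    have hdisj2 : Disjoint ({ω | I k0 ω = 1} ∩ (X k0) ⁻¹' Set.Iic (2 - μ))
        ({ω | I k0 ω = 2} ∩ (X k0) ⁻¹' Set.Iic (2 - μ)) :=
      (hIdisj.mono Set.inter_subset_left Set.inter_subset_left)
    have : q.toReal
        = (P ({ω | I k0 ω = 1} ∩ (X k0) ⁻¹' Set.Iic (2 - μ))).toReal
          + (P ({ω | I k0 ω = 2} ∩ (X k0) ⁻¹' Set.Iic (2 - μ))).toReal := by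
      rw [hq, hsplit, measure_union hdisj2 (hImeas2.inter (hXmeas k0 hmIic)),
        ENNReal.toReal_add (hPfin _) (hPfin _)]
    rw [this, hg1 _ hmIic, hg2 _ hmIic, hint1, hint2]
    have hα2n : α 2 * n ≠ 0 := by positivity
    have : α 2 * (1 + lam - μ) = α 2 - 2 * Real.log n / n := by
      rw [hμ]
      field_simp
      ring
    rw [this]
    linarith [halphasum]
  -- final inequality chain
  have hq1 : q ≠ ⊤ := hPfin _
  have hmono : (P ({ω | ∀ ℓ : Fin n, X ℓ ω ≤ 2 - μ} ∩ {ω | I k ω = 1})).toReal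
      ≤ (P {ω | I k ω = 1}).toReal * q.toReal ^ (n - 1) := by
    have := measure_mono (μ := P) hsub
    rw [hprod2] at this
    calc (P ({ω | ∀ ℓ : Fin n, X ℓ ω ≤ 2 - μ} ∩ {ω | I k ω = 1})).toReal
        ≤ (P {ω | I k ω = 1} * q ^ (n - 1)).toReal := by
          apply ENNReal.toReal_mono _ this
          exact ENNReal.mul_ne_top (hPfin _) (ENNReal.pow_ne_top hq1)
      _ = (P {ω | I k ω = 1}).toReal * q.toReal ^ (n - 1) := by
          rw [ENNReal.toReal_mul, ENNReal.toReal_pow]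
  refine le_trans hmono ?_
  rw [mul_comm (1 / (n:ℝ)) _]
  apply mul_le_mul_of_nonneg_left _ ENNReal.toReal_nonneg
  -- key: (1 - 2 log n / n)^(n-1) ≤ 1/n
  rw [hqval]
  set x : ℝ := 2 * Real.log n / n with hx
  have hx0 : 0 ≤ x := by positivity
  have hr0 : (0 : ℝ) ≤ 1 - x := by rw [← hqval]; exact ENNReal.toReal_nonneg
  have hstep : 1 - x ≤ Real.exp (-x) := by
    have := Real.add_one_le_exp (-x)
    linarith
  have hnn : ((n - 1 : ℕ) : ℝ) = (n : ℝ) - 1 := by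
    have h1 : 1 ≤ n := by omega
    push_cast [h1]
    ring
  calc (1 - x) ^ (n - 1) ≤ Real.exp (-x) ^ (n - 1) := pow_le_pow_left₀ hr0 hstep _
    _ = Real.exp (-x * ((n : ℝ) - 1)) := by
        rw [← Real.exp_nat_mul, hnn]
        congr 1
        ring
    _ ≤ Real.exp (-Real.log n) := by
        apply Real.exp_le_exp.2
        have h2c : (2 : ℝ) ≤ n := by exact_mod_cast hn
        have key : Real.log n ≤ 2 * Real.log n / n * ((n : ℝ) - 1) := by
          rw [div_mul_eq_mul_div, le_div_iff₀ hn0]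
          nlinarith [mul_nonneg hlogn (by linarith : (0 : ℝ) ≤ (n : ℝ) - 2)]
        rw [hx]
        linarith
    _ = 1 / n := by
        rw [Real.exp_neg, Real.exp_log hn0, one_div]
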